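/- arXiv:1704.04943 — 2 statements merged into one kernel-verified Lean document; each statement's English description precedes it below -/
import Mathlib

section
/- Let Y = (Y₁, Y₂, Y₃) be a centered Gaussian vector in ℝ³ with covariance matrix C₁ = [[3,0,1],[0,1,0],[1,0,3]]. Then E[ |Y₁Y₃ − Y₂²| ] = 4/√3. -/
open Real MeasureTheory Set

noncomputable def e3 : (ℝ × ℝ × ℝ) ≃ₗ[ℝ] (Fin 3 → ℝ) where
  toFun x := ![x.1, x.2.1, x.2.2]
  invFun v := (v 0, v 1, v 2)
  map_add' x y := by funext i; fin_cases i <;> simp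
  map_smul' c x := by funext i; fin_cases i <;> simp
  left_inv x := by simp
  right_inv v := by funext i; fin_cases i <;> simp

noncomputable def Tlin : (ℝ × ℝ × ℝ) →ₗ[ℝ] (ℝ × ℝ × ℝ) where
  toFun x := (Real.sqrt 2 * x.1 + x.2.2, x.2.1, Real.sqrt 2 * x.1 - x.2.2)
  map_add' x y := by refine Prod.ext ?_ (Prod.ext ?_ ?_) <;> simp <;> ring
  map_smul' c x := by refine Prod.ext ?_ (Prod.ext ?_ ?_) <;> simp <;> ring

lemma Tlin_det_abs : |LinearMap.det Tlin| = 2 * Real.sqrt 2 := by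
  have h := LinearMap.det_conj Tlin e3
  rw [← h, ← LinearMap.det_toMatrix']
  have hm : LinearMap.toMatrix' ((e3 : (ℝ × ℝ × ℝ) →ₗ[ℝ] (Fin 3 → ℝ)) ∘ₗ Tlin ∘ₗ
      (e3.symm : (Fin 3 → ℝ) →ₗ[ℝ] (ℝ × ℝ × ℝ))) =
      Matrix.of ![![Real.sqrt 2, 0, 1], ![0, 1, 0], ![Real.sqrt 2, 0, -1]] := by
    ext i j
    fin_cases i <;> fin_cases j <;>
      simp [LinearMap.toMatrix'_apply, e3, Tlin, Pi.single_apply]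
  rw [hm, Matrix.det_fin_three]
  have h2 : Real.sqrt 2 ≥ 0 := Real.sqrt_nonneg 2
  simp [Matrix.of_apply]
  rw [abs_of_nonpos (by nlinarith)]
  ring

lemma Tlin_injective : Function.Injective Tlin := by
  intro a b hab
  have hs : (0:ℝ) < Real.sqrt 2 := by positivity
  rw [Prod.ext_iff, Prod.ext_iff] at hab
  obtain ⟨h1, h2, h3⟩ := hab
  simp only [Tlin, LinearMap.coe_mk, AddHom.coe_mk] at h1 h2 h3
  refine Prod.ext ?_ (Prod.ext ?_ ?_)
  · have : Real.sqrt 2 * a.1 = Real.sqrt 2 * b.1 := by linarith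
    exact mul_left_cancel₀ hs.ne' this
  · exact h2
  · linarith

lemma Tlin_surjective : Function.Surjective Tlin := by
  intro y
  have hs : (0:ℝ) < Real.sqrt 2 := by positivity
  refine ⟨((y.1 + y.2.2) / (2 * Real.sqrt 2), y.2.1, (y.1 - y.2.2) / 2), ?_⟩
  simp only [Tlin, LinearMap.coe_mk, AddHom.coe_mk]
  refine Prod.ext ?_ (Prod.ext rfl ?_) <;> · field_simp; ring

instance : (volume : Measure (ℝ×ℝ×ℝ)).IsAddHaarMeasure :=
  inferInstanceAs (((volume : Measure ℝ).prod (volume : Measure (ℝ×ℝ))).IsAddHaarMeasure)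

lemma integral_comp_Tlin (g : ℝ × ℝ × ℝ → ℝ) :
    ∫ y : ℝ × ℝ × ℝ, g y = ∫ x : ℝ × ℝ × ℝ, (2 * Real.sqrt 2) * g (Tlin x) := by
  have key := integral_image_eq_integral_abs_det_fderiv_smul (volume : Measure (ℝ × ℝ × ℝ))
    (MeasurableSet.univ) (f' := fun _ => Tlin.toContinuousLinearMap)
    (fun x _ => Tlin.toContinuousLinearMap.hasFDerivAt.hasFDerivWithinAt)
    (Tlin_injective.injOn) g
  simp only [LinearMap.coe_toContinuousLinearMap'] at key
  have himg : Tlin '' Set.univ = Set.univ := by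
    rw [Set.image_univ, Set.range_eq_univ]
    exact Tlin_surjective
  rw [himg] at key
  simp only [MeasureTheory.setIntegral_univ] at key
  rw [key]
  congr 1
  funext x
  have hdet : (Tlin.toContinuousLinearMap : (ℝ × ℝ × ℝ) →L[ℝ] (ℝ × ℝ × ℝ)).det
      = LinearMap.det Tlin := by
    rw [ContinuousLinearMap.det]
    congr 1
  rw [hdet, Tlin_det_abs]
  simp [LinearMap.coe_toContinuousLinearMap']


lemma gauss1 : ∫ x : ℝ, exp (-x ^ 2 / 2) = Real.sqrt (2 * π) := by
  have h := integral_gaussian (1/2)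
  rw [show π / (1/2) = 2 * π by ring] at h
  rw [← h]
  congr 1; funext x; congr 1; ring

lemma gauss3 : ∫ x : ℝ, exp (-(3 * x ^ 2) / 2) = Real.sqrt (2 * π / 3) := by
  have h := integral_gaussian (3/2)
  rw [show π / (3/2) = 2 * π / 3 by ring] at h
  rw [← h]
  congr 1; funext x; congr 1; ring

lemma texp : ∫ t in Ioi (0:ℝ), t * exp (-t / 2) = 4 := by
  have h := integral_rpow_mul_exp_neg_mul_rpow (p := 1) (q := 1) (b := 1/2)
    (by norm_num) (by norm_num) (by norm_num)
  simp only [Real.rpow_one] at h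
  rw [show ∫ t in Ioi (0:ℝ), t * exp (-t / 2) = ∫ x in Ioi (0:ℝ), x * exp (-(1/2) * x) by
    congr 1; funext x; congr 1; ring] at *
  have hG : Real.Gamma ((1+1)/1 : ℝ) = 1 := by
    rw [show ((1+1)/1:ℝ) = 1+1 by norm_num, Real.Gamma_add_one one_ne_zero, Real.Gamma_one]
    norm_num
  have hp : ((1:ℝ)/2) ^ (-(1+1)/1 : ℝ) = 4 := by
    rw [show (-(1+1)/1:ℝ) = ((-2 : ℤ):ℝ) by norm_num, Real.rpow_intCast]
    norm_num
  rw [h, hG, hp]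
  norm_num

lemma gauss2 : ∫ x : ℝ, x ^ 2 * exp (-x ^ 2 / 2) = Real.sqrt (2 * π) := by
  have h := integral_comp_abs (f := fun t => t ^ 2 * exp (-t ^ 2 / 2))
  simp only [sq_abs] at h
  have h2 : ∫ x in Ioi (0:ℝ), x ^ 2 * exp (-x ^ 2 / 2)
      = ∫ x in Ioi (0:ℝ), x ^ (2:ℝ) * exp (-(1/2) * x ^ (2:ℝ)) := by
    refine setIntegral_congr_fun measurableSet_Ioi (fun x hx => ?_)
    rw [show ((2:ℝ)) = ((2:ℕ):ℝ) by norm_num, Real.rpow_natCast]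
    congr 2
    ring
  have h3 := integral_rpow_mul_exp_neg_mul_rpow (p := 2) (q := 2) (b := 1/2)
    (by norm_num) (by norm_num) (by norm_num)
  have hG : Real.Gamma ((2+1)/2 : ℝ) = Real.sqrt π / 2 := by
    rw [show ((2+1)/2:ℝ) = 1/2 + 1 by norm_num, Real.Gamma_add_one (by norm_num),
      Real.Gamma_one_half_eq]
    ring
  have hp : ((1:ℝ)/2) ^ (-(2+1)/2 : ℝ) = 2 * Real.sqrt 2 := by
    rw [show ((1:ℝ)/2) = 2⁻¹ by norm_num, show (-(2+1)/2 : ℝ) = -(3/2) by norm_num,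
      Real.inv_rpow (by norm_num : (0:ℝ) ≤ 2), Real.rpow_neg (by norm_num : (0:ℝ) ≤ 2), inv_inv,
      show (3/2:ℝ) = 1 + 1/2 by norm_num, Real.rpow_add (by norm_num : (0:ℝ) < 2), Real.rpow_one,
      ← Real.sqrt_eq_rpow]
  rw [h, h2, h3, hp, hG, show (2:ℝ) * π = 2 * π by rfl, Real.sqrt_mul (by norm_num : (0:ℝ) ≤ 2) π]
  ring

lemma halfline {a : ℝ} (ha : 0 ≤ a) :
    ∫ s in Ioi (0:ℝ), max (s - a) 0 * exp (-s / 2) = 4 * exp (-a / 2) := by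
  have hmaj : IntegrableOn (fun s : ℝ => s * exp (-s / 2)) (Ioi 0) := by
    have h := integrableOn_rpow_mul_exp_neg_mul_rpow (p := 1) (s := 1) (b := 1/2)
      (by norm_num) (by norm_num) (by norm_num)
    refine h.congr_fun (fun x hx => ?_) measurableSet_Ioi
    simp only [Real.rpow_one]
    ring_nf
  have hint : IntegrableOn (fun s : ℝ => max (s - a) 0 * exp (-s / 2)) (Ioi 0) := by
    refine Integrable.mono' hmaj ?_ ?_
    · exact (((continuous_id.sub continuous_const).max continuous_const).mul
        ((continuous_id.neg.div_const 2).rexp)).aestronglyMeasurable.restrict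
    · filter_upwards [ae_restrict_mem measurableSet_Ioi] with s hs
      rw [Real.norm_eq_abs, abs_of_nonneg (by positivity)]
      have h1 : max (s - a) 0 ≤ s := by
        rw [mem_Ioi] at hs
        exact max_le (by linarith) hs.le
      exact mul_le_mul_of_nonneg_right h1 (exp_pos _).le
  rw [← Ioc_union_Ioi_eq_Ioi ha, setIntegral_union (Set.Ioc_disjoint_Ioi le_rfl)
    measurableSet_Ioi (hint.mono_set Ioc_subset_Ioi_self) (hint.mono_set (Ioi_subset_Ioi ha))]
  have hzero : ∫ s in Ioc (0:ℝ) a, max (s - a) 0 * exp (-s / 2) = 0 := by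
    rw [setIntegral_congr_fun measurableSet_Ioc (g := fun _ => (0:ℝ))
      (fun s hs => by rw [max_eq_right (by linarith [hs.2])]; ring)]
    simp
  have hshift : ∫ s in Ioi a, max (s - a) 0 * exp (-s / 2)
      = ∫ t in Ioi (0:ℝ), (t * exp (-t / 2)) * exp (-a / 2) := by
    have key := (measurePreserving_add_right (volume : Measure ℝ) a).setIntegral_preimage_emb
      (measurableEmbedding_addRight a) (fun s => max (s - a) 0 * exp (-s / 2)) (Ioi a)
    have hpre : (fun x : ℝ => x + a) ⁻¹' Ioi a = Ioi 0 := by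
      ext x; simp
    rw [hpre] at key
    rw [← key]
    refine setIntegral_congr_fun measurableSet_Ioi (fun t ht => ?_)
    rw [mem_Ioi] at ht
    rw [max_eq_left (by linarith), show -(t + a) / 2 = -t/2 + -a/2 by ring, Real.exp_add]
    ring
  rw [hzero, hshift, integral_mul_const, texp]
  ring

lemma polar {a : ℝ} (ha : 0 ≤ a) :
    ∫ p : ℝ × ℝ, max (p.1 ^ 2 + p.2 ^ 2 - a) 0 * exp (-(p.1 ^ 2 + p.2 ^ 2) / 2)
      = 4 * π * exp (-a / 2) := by
  rw [← integral_comp_polarCoord_symm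
    (fun p : ℝ × ℝ => max (p.1 ^ 2 + p.2 ^ 2 - a) 0 * exp (-(p.1 ^ 2 + p.2 ^ 2) / 2))]
  rw [polarCoord_target]
  have hcong : ∫ p in Ioi (0:ℝ) ×ˢ Ioo (-π) π, p.1 •
        (max ((polarCoord.symm p).1 ^ 2 + (polarCoord.symm p).2 ^ 2 - a) 0 *
          exp (-((polarCoord.symm p).1 ^ 2 + (polarCoord.symm p).2 ^ 2) / 2))
      = ∫ p in Ioi (0:ℝ) ×ˢ Ioo (-π) π,
          (fun r => r * (max (r ^ 2 - a) 0 * exp (-r ^ 2 / 2))) p.1 * (fun _ : ℝ => (1:ℝ)) p.2 := by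
    refine setIntegral_congr_fun (measurableSet_Ioi.prod measurableSet_Ioo) (fun p hp => ?_)
    have hr : (polarCoord.symm p).1 ^ 2 + (polarCoord.symm p).2 ^ 2 = p.1 ^ 2 := by
      simp only [polarCoord_symm_apply]
      linear_combination (p.1 ^ 2) * Real.sin_sq_add_cos_sq p.2
    rw [hr, smul_eq_mul]
    ring
  have h2 := setIntegral_prod_mul (μ := (volume : Measure ℝ)) (ν := (volume : Measure ℝ))
    (fun r => r * (max (r ^ 2 - a) 0 * exp (-r ^ 2 / 2))) (fun _ => (1:ℝ)) (Ioi 0) (Ioo (-π) π)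
  rw [hcong, Measure.volume_eq_prod, h2]
  have hθ : ∫ _ in Ioo (-π) π, (1:ℝ) = 2 * π := by
    simp [Real.volume_Ioo, two_mul, ENNReal.toReal_ofReal (by positivity : (0:ℝ) ≤ π + π), pi_pos.le]
  have hr2 : ∫ r in Ioi (0:ℝ), r * (max (r ^ 2 - a) 0 * exp (-r ^ 2 / 2))
      = 2 * exp (-a / 2) := by
    have h := integral_comp_rpow_Ioi (fun s => max (s - a) 0 * exp (-s / 2))
      (p := 2) two_ne_zero
    have hL : ∫ x in Ioi (0:ℝ), (|2| * x ^ ((2:ℝ) - 1)) •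
          ((fun s => max (s - a) 0 * exp (-s / 2)) (x ^ (2:ℝ)))
        = ∫ x in Ioi (0:ℝ), 2 * (x * (max (x ^ 2 - a) 0 * exp (-x ^ 2 / 2))) := by
      refine setIntegral_congr_fun measurableSet_Ioi (fun x hx => ?_)
      rw [show ((2:ℝ) - 1) = 1 by norm_num, Real.rpow_one,
        show ((2:ℝ)) = ((2:ℕ):ℝ) by norm_num, Real.rpow_natCast]
      rw [smul_eq_mul]
      norm_num
      ring
    rw [hL] at h
    rw [MeasureTheory.integral_const_mul] at h
    rw [halfline ha] at h
    linarith
  rw [hθ, hr2]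
  ring


lemma exp_split3 (x : ℝ × ℝ × ℝ) : exp (-(x.1 ^ 2 + x.2.1 ^ 2 + x.2.2 ^ 2) / 2)
    = exp (-x.1 ^ 2 / 2) * (exp (-x.2.1 ^ 2 / 2) * exp (-x.2.2 ^ 2 / 2)) := by
  rw [← Real.exp_add, ← Real.exp_add]
  congr 1
  ring

noncomputable def fE : ℝ → ℝ := fun u => exp (-u ^ 2 / 2)
noncomputable def fQ : ℝ → ℝ := fun u => u ^ 2 * exp (-u ^ 2 / 2)
noncomputable def fA : ℝ → ℝ := fun u => 2 * (u ^ 2 * exp (-u ^ 2 / 2))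

lemma int_sep {f g h : ℝ → ℝ} (hf : Integrable f) (hg : Integrable g) (hh : Integrable h) :
    Integrable (fun x : ℝ × ℝ × ℝ => f x.1 * (g x.2.1 * h x.2.2)) := by
  have hgh : Integrable (fun z : ℝ × ℝ => g z.1 * h z.2) := by
    rw [Measure.volume_eq_prod]
    exact Integrable.mul_prod hg hh
  rw [Measure.volume_eq_prod]
  exact Integrable.mul_prod hf hgh

lemma sep_integral (f g h : ℝ → ℝ) :
    ∫ x : ℝ × ℝ × ℝ, f x.1 * (g x.2.1 * h x.2.2)
      = (∫ u, f u) * ((∫ u, g u) * (∫ u, h u)) := by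
  calc ∫ x : ℝ × ℝ × ℝ, f x.1 * (g x.2.1 * h x.2.2)
      = (∫ u, f u) * (∫ z : ℝ × ℝ, g z.1 * h z.2) := by
        rw [Measure.volume_eq_prod]
        exact integral_prod_mul f (fun z : ℝ × ℝ => g z.1 * h z.2)
    _ = (∫ u, f u) * ((∫ u, g u) * (∫ u, h u)) := by
        rw [Measure.volume_eq_prod, integral_prod_mul]

lemma hI1 : Integrable fE := by
  have e : (fun x : ℝ => exp (-(1/2) * x ^ 2)) = fE := by
    funext x; simp only [fE]; ring_nf
  exact e ▸ integrable_exp_neg_mul_sq (by norm_num)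

lemma hI2 : Integrable fQ := by
  have h := integrable_rpow_mul_exp_neg_mul_sq (by norm_num : (0:ℝ) < 1/2) (s := 2)
    (by norm_num)
  have e : (fun x : ℝ => x ^ (2:ℝ) * exp (-(1/2) * x ^ 2)) = fQ := by
    funext x
    simp only [fQ]
    rw [show ((2:ℝ)) = ((2:ℕ):ℝ) by norm_num, Real.rpow_natCast]
    ring_nf
  exact e ▸ h

lemma hIA : Integrable fA := by
  have : Integrable (fun u : ℝ => 2 * fQ u) := hI2.const_mul 2
  exact this.congr (Filter.Eventually.of_forall (fun x => by simp [fA, fQ]))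

lemma int_fE : ∫ u, fE u = Real.sqrt (2 * π) := gauss1
lemma int_fQ : ∫ u, fQ u = Real.sqrt (2 * π) := gauss2
lemma int_fA : ∫ u, fA u = 2 * Real.sqrt (2 * π) := by
  simp only [fA]
  rw [MeasureTheory.integral_const_mul, gauss2]

lemma intM : Integrable (fun x : ℝ × ℝ × ℝ =>
    (2 * x.1 ^ 2 + x.2.1 ^ 2 + x.2.2 ^ 2) * exp (-(x.1 ^ 2 + x.2.1 ^ 2 + x.2.2 ^ 2) / 2)) := by
  have hA := int_sep hIA hI1 hI1
  have hB := int_sep hI1 hI2 hI1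
  have hC := int_sep hI1 hI1 hI2
  have key := (hA.add hB).add hC
  refine key.congr (Filter.Eventually.of_forall (fun x => ?_))
  simp only [Pi.add_apply, fA, fQ, fE]
  rw [exp_split3 x]
  ring

lemma abs_w_le (x : ℝ × ℝ × ℝ) : |2 * x.1 ^ 2 - x.2.1 ^ 2 - x.2.2 ^ 2|
    ≤ 2 * x.1 ^ 2 + x.2.1 ^ 2 + x.2.2 ^ 2 := by
  rw [abs_le]
  constructor <;> nlinarith [sq_nonneg x.1, sq_nonneg x.2.1, sq_nonneg x.2.2]

lemma intW : Integrable (fun x : ℝ × ℝ × ℝ =>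
    (2 * x.1 ^ 2 - x.2.1 ^ 2 - x.2.2 ^ 2) * exp (-(x.1 ^ 2 + x.2.1 ^ 2 + x.2.2 ^ 2) / 2)) := by
  refine intM.mono' ?_ ?_
  · have : Continuous fun x : ℝ × ℝ × ℝ => x.1 ^ 2 + x.2.1 ^ 2 + x.2.2 ^ 2 := by fun_prop
    exact (Continuous.mul (by fun_prop) (this.neg.div_const 2).rexp).aestronglyMeasurable
  · refine Filter.Eventually.of_forall (fun x => ?_)
    rw [Real.norm_eq_abs, abs_mul, abs_of_nonneg (exp_pos _).le]
    exact mul_le_mul_of_nonneg_right (abs_w_le x) (exp_pos _).le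

lemma intMax : Integrable (fun x : ℝ × ℝ × ℝ =>
    max (x.2.1 ^ 2 + x.2.2 ^ 2 - 2 * x.1 ^ 2) 0 *
      exp (-(x.1 ^ 2 + x.2.1 ^ 2 + x.2.2 ^ 2) / 2)) := by
  refine intM.mono' ?_ ?_
  · have h1 : Continuous fun x : ℝ × ℝ × ℝ => x.1 ^ 2 + x.2.1 ^ 2 + x.2.2 ^ 2 := by fun_prop
    have h2 : Continuous fun x : ℝ × ℝ × ℝ =>
        max (x.2.1 ^ 2 + x.2.2 ^ 2 - 2 * x.1 ^ 2) 0 := by fun_prop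
    exact (h2.mul (h1.neg.div_const 2).rexp).aestronglyMeasurable
  · refine Filter.Eventually.of_forall (fun x => ?_)
    rw [Real.norm_eq_abs, abs_mul, abs_of_nonneg (exp_pos _).le,
      abs_of_nonneg (le_max_right _ _)]
    refine mul_le_mul_of_nonneg_right ?_ (exp_pos _).le
    exact max_le (by nlinarith [sq_nonneg x.1]) (by positivity)

lemma J1 : ∫ x : ℝ × ℝ × ℝ,
    (2 * x.1 ^ 2 - x.2.1 ^ 2 - x.2.2 ^ 2) * exp (-(x.1 ^ 2 + x.2.1 ^ 2 + x.2.2 ^ 2) / 2)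
    = 0 := by
  have hA := int_sep hIA hI1 hI1
  have hB := int_sep hI1 hI2 hI1
  have hC := int_sep hI1 hI1 hI2
  have key : (fun x : ℝ × ℝ × ℝ =>
      (2 * x.1 ^ 2 - x.2.1 ^ 2 - x.2.2 ^ 2) * exp (-(x.1 ^ 2 + x.2.1 ^ 2 + x.2.2 ^ 2) / 2))
      = fun x : ℝ × ℝ × ℝ =>
        fA x.1 * (fE x.2.1 * fE x.2.2) - fE x.1 * (fQ x.2.1 * fE x.2.2)
          - fE x.1 * (fE x.2.1 * fQ x.2.2) := by
    funext x
    simp only [fA, fQ, fE]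
    rw [exp_split3 x]
    ring
  have hAB : Integrable (fun x : ℝ × ℝ × ℝ =>
      fA x.1 * (fE x.2.1 * fE x.2.2) - fE x.1 * (fQ x.2.1 * fE x.2.2)) := hA.sub hB
  have e1 : ∫ x : ℝ × ℝ × ℝ,
      (fA x.1 * (fE x.2.1 * fE x.2.2) - fE x.1 * (fQ x.2.1 * fE x.2.2)
        - fE x.1 * (fE x.2.1 * fQ x.2.2))
      = (∫ x : ℝ × ℝ × ℝ, fA x.1 * (fE x.2.1 * fE x.2.2) - fE x.1 * (fQ x.2.1 * fE x.2.2))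
        - ∫ x : ℝ × ℝ × ℝ, fE x.1 * (fE x.2.1 * fQ x.2.2) := integral_sub hAB hC
  have e2 : ∫ x : ℝ × ℝ × ℝ,
      (fA x.1 * (fE x.2.1 * fE x.2.2) - fE x.1 * (fQ x.2.1 * fE x.2.2))
      = (∫ x : ℝ × ℝ × ℝ, fA x.1 * (fE x.2.1 * fE x.2.2))
        - ∫ x : ℝ × ℝ × ℝ, fE x.1 * (fQ x.2.1 * fE x.2.2) := integral_sub hA hB
  rw [key, e1, e2, sep_integral fA fE fE, sep_integral fE fQ fE, sep_integral fE fE fQ,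
    int_fA, int_fE, int_fQ]
  ring

lemma J2 : ∫ x : ℝ × ℝ × ℝ,
    max (x.2.1 ^ 2 + x.2.2 ^ 2 - 2 * x.1 ^ 2) 0 * exp (-(x.1 ^ 2 + x.2.1 ^ 2 + x.2.2 ^ 2) / 2)
    = 4 * π * Real.sqrt (2 * π / 3) := by
  have hint := intMax
  rw [Measure.volume_eq_prod] at hint ⊢
  rw [integral_prod _ hint]
  have inner : ∀ u : ℝ, (∫ p : ℝ × ℝ,
      max ((u, p).2.1 ^ 2 + (u, p).2.2 ^ 2 - 2 * (u, p).1 ^ 2) 0 *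
        exp (-((u, p).1 ^ 2 + (u, p).2.1 ^ 2 + (u, p).2.2 ^ 2) / 2))
      = 4 * π * exp (-(2 * u ^ 2) / 2) * exp (-u ^ 2 / 2) := by
    intro u
    have hcong : (fun p : ℝ × ℝ =>
        max ((u, p).2.1 ^ 2 + (u, p).2.2 ^ 2 - 2 * (u, p).1 ^ 2) 0 *
          exp (-((u, p).1 ^ 2 + (u, p).2.1 ^ 2 + (u, p).2.2 ^ 2) / 2))
        = fun p : ℝ × ℝ =>
          (max (p.1 ^ 2 + p.2 ^ 2 - 2 * u ^ 2) 0 * exp (-(p.1 ^ 2 + p.2 ^ 2) / 2)) *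
            exp (-u ^ 2 / 2) := by
      funext p
      simp only
      rw [show -(u ^ 2 + p.1 ^ 2 + p.2 ^ 2) / 2 = -(p.1 ^ 2 + p.2 ^ 2) / 2 + -u ^ 2 / 2 by ring,
        Real.exp_add]
      ring
    rw [hcong, MeasureTheory.integral_mul_const, polar (by positivity : (0:ℝ) ≤ 2 * u ^ 2)]
  simp only [inner]
  have hcong2 : (fun u : ℝ => 4 * π * exp (-(2 * u ^ 2) / 2) * exp (-u ^ 2 / 2))
      = fun u : ℝ => (4 * π) * exp (-(3 * u ^ 2) / 2) := by
    funext u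
    rw [show -(3 * u ^ 2) / 2 = -(2 * u ^ 2) / 2 + -u ^ 2 / 2 by ring, Real.exp_add]
    ring
  rw [hcong2, MeasureTheory.integral_const_mul, gauss3]

lemma abs_split (t : ℝ) : |t| = t + 2 * max (-t) 0 := by
  rcases le_total 0 t with h | h
  · rw [abs_of_nonneg h, max_eq_right (by linarith)]; ring
  · rw [abs_of_nonpos h, max_eq_left (by linarith)]; ring

lemma h8val : ((8:ℝ)) ^ (-(1:ℝ)/2) = (2 * Real.sqrt 2)⁻¹ := by
  rw [show (-(1:ℝ)/2) = -(1/2) by norm_num, Real.rpow_neg (by norm_num), ← Real.sqrt_eq_rpow]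
  congr 1
  rw [show (8:ℝ) = 2^2 * 2 by norm_num, Real.sqrt_mul (by positivity),
    Real.sqrt_sq (by norm_num : (0:ℝ) ≤ 2)]

/-- For a centered Gaussian vector `Y = (Y₁, Y₂, Y₃)` in `ℝ³` with covariance matrix
`C₁ = [[3,0,1],[0,1,0],[1,0,3]]` (so `det C₁ = 8` and
`yᵗ C₁⁻¹ y = (3y₁² − 2y₁y₃ + 3y₃²)/8 + y₂²`), one has `E[|Y₁Y₃ − Y₂²|] = 4/√3`.
The expectation is written out as an integral against the explicit Gaussian density. -/
theorem abs_det_hessian_expectation :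
    ∫ y : ℝ × ℝ × ℝ,
        |y.1 * y.2.2 - y.2.1 ^ 2| *
          ((2 * π) ^ (-(3 : ℝ) / 2) * (8 : ℝ) ^ (-(1 : ℝ) / 2) *
            exp (-((3 * y.1 ^ 2 - 2 * y.1 * y.2.2 + 3 * y.2.2 ^ 2) / 8 + y.2.1 ^ 2) / 2))
      = 4 / sqrt 3 := by
  have hs : Real.sqrt 2 ^ 2 = 2 := Real.sq_sqrt (by norm_num)
  have hs0 : Real.sqrt 2 ≠ 0 := by positivity
  calc ∫ y : ℝ × ℝ × ℝ,
        |y.1 * y.2.2 - y.2.1 ^ 2| *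
          ((2 * π) ^ (-(3 : ℝ) / 2) * (8 : ℝ) ^ (-(1 : ℝ) / 2) *
            exp (-((3 * y.1 ^ 2 - 2 * y.1 * y.2.2 + 3 * y.2.2 ^ 2) / 8 + y.2.1 ^ 2) / 2))
      = ∫ x : ℝ × ℝ × ℝ, 2 * Real.sqrt 2 *
          (|(Real.sqrt 2 * x.1 + x.2.2) * (Real.sqrt 2 * x.1 - x.2.2) - x.2.1 ^ 2| *
            ((2 * π) ^ (-(3 : ℝ) / 2) * (8 : ℝ) ^ (-(1 : ℝ) / 2) *
              exp (-((3 * (Real.sqrt 2 * x.1 + x.2.2) ^ 2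
                - 2 * (Real.sqrt 2 * x.1 + x.2.2) * (Real.sqrt 2 * x.1 - x.2.2)
                + 3 * (Real.sqrt 2 * x.1 - x.2.2) ^ 2) / 8 + x.2.1 ^ 2) / 2))) :=
        integral_comp_Tlin _
    _ = ∫ x : ℝ × ℝ × ℝ, (2 * π) ^ (-(3 : ℝ) / 2) *
          (|2 * x.1 ^ 2 - x.2.1 ^ 2 - x.2.2 ^ 2| *
            exp (-(x.1 ^ 2 + x.2.1 ^ 2 + x.2.2 ^ 2) / 2)) := by
        congr 1
        funext x
        have habs : (Real.sqrt 2 * x.1 + x.2.2) * (Real.sqrt 2 * x.1 - x.2.2) - x.2.1 ^ 2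
            = 2 * x.1 ^ 2 - x.2.1 ^ 2 - x.2.2 ^ 2 := by
          linear_combination (x.1 ^ 2) * hs
        have hexp : -((3 * (Real.sqrt 2 * x.1 + x.2.2) ^ 2
              - 2 * (Real.sqrt 2 * x.1 + x.2.2) * (Real.sqrt 2 * x.1 - x.2.2)
              + 3 * (Real.sqrt 2 * x.1 - x.2.2) ^ 2) / 8 + x.2.1 ^ 2) / 2
            = -(x.1 ^ 2 + x.2.1 ^ 2 + x.2.2 ^ 2) / 2 := by
          linear_combination (-(x.1 ^ 2) / 4) * hs
        rw [habs, hexp, h8val]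
        field_simp
    _ = (2 * π) ^ (-(3 : ℝ) / 2) * ∫ x : ℝ × ℝ × ℝ,
          |2 * x.1 ^ 2 - x.2.1 ^ 2 - x.2.2 ^ 2| *
            exp (-(x.1 ^ 2 + x.2.1 ^ 2 + x.2.2 ^ 2) / 2) :=
        MeasureTheory.integral_const_mul _ _
    _ = (2 * π) ^ (-(3 : ℝ) / 2) * ∫ x : ℝ × ℝ × ℝ,
          ((2 * x.1 ^ 2 - x.2.1 ^ 2 - x.2.2 ^ 2) * exp (-(x.1 ^ 2 + x.2.1 ^ 2 + x.2.2 ^ 2) / 2)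
            + 2 * (max (x.2.1 ^ 2 + x.2.2 ^ 2 - 2 * x.1 ^ 2) 0 *
                exp (-(x.1 ^ 2 + x.2.1 ^ 2 + x.2.2 ^ 2) / 2))) := by
        have hfun : (fun x : ℝ × ℝ × ℝ => |2 * x.1 ^ 2 - x.2.1 ^ 2 - x.2.2 ^ 2| *
              exp (-(x.1 ^ 2 + x.2.1 ^ 2 + x.2.2 ^ 2) / 2))
            = fun x : ℝ × ℝ × ℝ =>
              ((2 * x.1 ^ 2 - x.2.1 ^ 2 - x.2.2 ^ 2) * exp (-(x.1 ^ 2 + x.2.1 ^ 2 + x.2.2 ^ 2) / 2)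
                + 2 * (max (x.2.1 ^ 2 + x.2.2 ^ 2 - 2 * x.1 ^ 2) 0 *
                    exp (-(x.1 ^ 2 + x.2.1 ^ 2 + x.2.2 ^ 2) / 2))) := by
          funext x
          rw [abs_split (2 * x.1 ^ 2 - x.2.1 ^ 2 - x.2.2 ^ 2)]
          rw [show -(2 * x.1 ^ 2 - x.2.1 ^ 2 - x.2.2 ^ 2)
          = x.2.1 ^ 2 + x.2.2 ^ 2 - 2 * x.1 ^ 2 by ring]
          ring
        rw [hfun]
    _ = (2 * π) ^ (-(3 : ℝ) / 2) * (0 + 2 * (4 * π * Real.sqrt (2 * π / 3))) := by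
        rw [integral_add intW (intMax.const_mul 2), J1, MeasureTheory.integral_const_mul, J2]
    _ = 4 / Real.sqrt 3 := by
        have hπ : (0:ℝ) < 2 * π := by positivity
        have h32 : (2 * π) ^ ((3:ℝ)/2) = (2 * π) * Real.sqrt (2 * π) := by
          rw [show ((3:ℝ)/2) = 1 + 1/2 by norm_num, Real.rpow_add hπ, Real.rpow_one,
            ← Real.sqrt_eq_rpow]
        rw [show (-(3:ℝ)/2) = -((3:ℝ)/2) by norm_num, Real.rpow_neg hπ.le, h32]
        rw [show (2 * π / 3 : ℝ) = (2 * π) / 3 by ring,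
          Real.sqrt_div (by positivity : (0:ℝ) ≤ 2 * π) 3]
        have h1 : Real.sqrt (2 * π) ≠ 0 := by positivity
        have h3 : Real.sqrt 3 ≠ 0 := by positivity
        have hp : π ≠ 0 := pi_ne_zero
        field_simp
        ring
end

section
/- Let Z₁, Z₂ be independent standard Gaussian random variables and let t ∈ ℝ. Then E[ | (Z₁ + t/2)·t − (Z₁ + t/2)² − Z₂² | ] = E[ | −Z₁² − Z₂² + t²/4 | ] = −2 + 4 e^{−t²/8} + t²/4. -/
open Real MeasureTheory ProbabilityTheory Set Filter Topology
open scoped ENNReal NNReal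



lemma antider {c : ℝ} (x : ℝ) :
    HasDerivAt (fun r : ℝ => (2 - c + r ^ 2) * Real.exp (-(r ^ 2) / 2))
      (x * Real.exp (-(x ^ 2) / 2) * (c - x ^ 2)) x := by
  have h1 : HasDerivAt (fun r : ℝ => 2 - c + r ^ 2) (2 * x) x := by
    simpa using (hasDerivAt_pow 2 x).const_add (2 - c)
  have h2 : HasDerivAt (fun r : ℝ => -(r ^ 2) / 2) (-x) x := by
    have := ((hasDerivAt_pow 2 x).neg).div_const 2
    simpa using this.congr_deriv (by ring)
  have h3 := h2.exp
  have := h1.fun_mul h3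
  exact this.congr_deriv (by ring)

lemma integrableOn_P {c : ℝ} :
    IntegrableOn (fun r : ℝ => r * Real.exp (-(r ^ 2) / 2) * |c - r ^ 2|) (Ioi 0) := by
  have h1 : IntegrableOn (fun x : ℝ => x ^ (1 : ℝ) * Real.exp (-(1/2 : ℝ) * x ^ 2)) (Ioi 0) :=
    integrableOn_rpow_mul_exp_neg_mul_sq (by norm_num) (by norm_num)
  have h3 : IntegrableOn (fun x : ℝ => x ^ (3 : ℝ) * Real.exp (-(1/2 : ℝ) * x ^ 2)) (Ioi 0) :=
    integrableOn_rpow_mul_exp_neg_mul_sq (by norm_num) (by norm_num)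
  have hb : IntegrableOn
      (fun x : ℝ => |c| * (x ^ (1 : ℝ) * Real.exp (-(1/2 : ℝ) * x ^ 2))
        + x ^ (3 : ℝ) * Real.exp (-(1/2 : ℝ) * x ^ 2)) (Ioi 0) :=
    (h1.const_mul _).add h3
  refine Integrable.mono' hb ?_ ?_
  · exact (Continuous.aestronglyMeasurable (by continuity)).restrict
  · filter_upwards [ae_restrict_mem measurableSet_Ioi] with x hx
    have hx' : (0:ℝ) ≤ x := (le_of_lt hx)
    rw [Real.norm_eq_abs, abs_mul, abs_mul, abs_abs, abs_of_nonneg hx',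
      abs_of_nonneg (Real.exp_pos _).le, Real.rpow_one,
      show (3:ℝ) = ((3:ℕ):ℝ) by norm_num, Real.rpow_natCast]
    have hE : Real.exp (-(x ^ 2) / 2) = Real.exp (-(1/2 : ℝ) * x ^ 2) := by ring_nf
    rw [hE]
    have habs : |c - x ^ 2| ≤ |c| + x ^ 2 := by
      calc |c - x ^ 2| ≤ |c| + |x ^ 2| := abs_sub _ _
      _ = |c| + x ^ 2 := by rw [abs_of_nonneg (sq_nonneg x)]
    nlinarith [Real.exp_pos (-(1/2:ℝ) * x ^ 2), mul_le_mul_of_nonneg_left habs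
      (mul_nonneg hx' (Real.exp_pos (-(1/2:ℝ) * x ^ 2)).le)]

lemma key_radial {c : ℝ} (hc : 0 ≤ c) :
    ∫ r in Ioi (0:ℝ), r * Real.exp (-(r ^ 2) / 2) * |c - r ^ 2|
      = c - 2 + 4 * Real.exp (-(c / 2)) := by
  set a := Real.sqrt c with ha
  have ha0 : 0 ≤ a := Real.sqrt_nonneg c
  have ha2 : a ^ 2 = c := Real.sq_sqrt hc
  have hsplit : Ioi (0:ℝ) = Ioc 0 a ∪ Ioi a := (Set.Ioc_union_Ioi_eq_Ioi ha0).symm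
  have hP := integrableOn_P (c := c)
  rw [hsplit]
  rw [setIntegral_union (Set.Ioc_disjoint_Ioi le_rfl) measurableSet_Ioi
    (hP.mono_set (by rw [hsplit]; exact subset_union_left))
    (hP.mono_set (by rw [hsplit]; exact subset_union_right))]
  have hIoc : ∫ r in Ioc (0:ℝ) a, r * Real.exp (-(r ^ 2) / 2) * |c - r ^ 2|
      = 2 * Real.exp (-(c / 2)) - 2 + c := by
    rw [setIntegral_congr_fun measurableSet_Ioc
      (g := fun r => r * Real.exp (-(r ^ 2) / 2) * (c - r ^ 2)) ?_]
    · rw [← intervalIntegral.integral_of_le ha0]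
      rw [intervalIntegral.integral_eq_sub_of_hasDerivAt (fun x _ => antider x)
        ((Continuous.intervalIntegrable (by continuity)) _ _)]
      show (2 - c + a ^ 2) * Real.exp (-(a ^ 2) / 2)
          - (2 - c + (0:ℝ) ^ 2) * Real.exp (-((0:ℝ) ^ 2) / 2) = _
      rw [ha2]
      norm_num
      ring_nf
    · intro x hx
      have hx2 : x ^ 2 ≤ c := by
        have := hx.2
        nlinarith [hx.1, ha2]
      show x * Real.exp (-(x ^ 2) / 2) * |c - x ^ 2| = _
      rw [abs_of_nonneg (by linarith)]
  have hIoi : ∫ r in Ioi a, r * Real.exp (-(r ^ 2) / 2) * |c - r ^ 2|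
      = 2 * Real.exp (-(c / 2)) := by
    have heq : EqOn (fun r : ℝ => r * Real.exp (-(r ^ 2) / 2) * (r ^ 2 - c))
        (fun r : ℝ => r * Real.exp (-(r ^ 2) / 2) * |c - r ^ 2|) (Ioi a) := by
      intro x hx
      have hax : a < x := hx
      have hx2 : c ≤ x ^ 2 := by nlinarith [ha2, ha0]
      show x * Real.exp (-(x ^ 2) / 2) * (x ^ 2 - c)
          = x * Real.exp (-(x ^ 2) / 2) * |c - x ^ 2|
      rw [abs_of_nonpos (by linarith), neg_sub]
    rw [setIntegral_congr_fun measurableSet_Ioi heq.symm]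
    have hderiv : ∀ x ∈ Ioi a, HasDerivAt
        (fun r : ℝ => -((2 - c + r ^ 2) * Real.exp (-(r ^ 2) / 2)))
        (x * Real.exp (-(x ^ 2) / 2) * (x ^ 2 - c)) x := by
      intro x _
      have := (antider (c := c) x).fun_neg
      exact this.congr_deriv (by ring)
    have hint : IntegrableOn (fun x : ℝ => x * Real.exp (-(x ^ 2) / 2) * (x ^ 2 - c)) (Ioi a) :=
      ((hP.mono_set (by rw [hsplit]; exact subset_union_right)).congr_fun heq.symm
        measurableSet_Ioi)
    have htend : Tendsto (fun r : ℝ => -((2 - c + r ^ 2) * Real.exp (-(r ^ 2) / 2)))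
        atTop (𝓝 0) := by
      have ta : Tendsto (fun r : ℝ => r ^ 2 / 2) atTop atTop :=
        (tendsto_pow_atTop two_ne_zero).atTop_div_const (by norm_num)
      have t1 : Tendsto (fun s : ℝ => (2 - c) * Real.exp (-s)) atTop (𝓝 0) := by
        simpa using (tendsto_exp_neg_atTop_nhds_zero).const_mul (2 - c)
      have t2 : Tendsto (fun s : ℝ => 2 * (s * Real.exp (-s))) atTop (𝓝 0) := by
        have := Real.tendsto_pow_mul_exp_neg_atTop_nhds_zero 1
        simpa using this.const_mul 2
      have := ((t1.add t2).comp ta).neg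
      simp only [Function.comp] at this
      convert this using 2 with r
      · have hE : Real.exp (-(r ^ 2) / 2) = Real.exp (-(r ^ 2 / 2)) := by ring_nf
        rw [hE]; ring
      · simp
    rw [integral_Ioi_of_hasDerivAt_of_tendsto
      (Continuous.continuousWithinAt (by continuity)) hderiv hint htend]
    rw [ha2]
    ring_nf
  rw [hIoc, hIoi]
  ring


lemma gaussian_prod_eq :
    (gaussianReal 0 1).prod (gaussianReal 0 1)
      = (volume : Measure (ℝ × ℝ)).withDensity
          (fun z => ENNReal.ofReal (gaussianPDFReal 0 1 z.1 * gaussianPDFReal 0 1 z.2)) := by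
  refine Measure.prod_eq fun s t hs ht => ?_
  rw [withDensity_apply _ (hs.prod ht), Measure.volume_eq_prod, ← Measure.prod_restrict]
  have h : ∀ z : ℝ × ℝ, ENNReal.ofReal (gaussianPDFReal 0 1 z.1 * gaussianPDFReal 0 1 z.2)
      = gaussianPDF 0 1 z.1 * gaussianPDF 0 1 z.2 := fun z => by
    rw [ENNReal.ofReal_mul (gaussianPDFReal_nonneg _ _ _)]; rfl
  simp_rw [h]
  rw [lintegral_prod_mul (measurable_gaussianPDF 0 1).aemeasurable
    (measurable_gaussianPDF 0 1).aemeasurable,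
    ← gaussianReal_apply 0 one_ne_zero s, ← gaussianReal_apply 0 one_ne_zero t]

lemma integral_gauss_prod (f : ℝ × ℝ → ℝ) :
    ∫ z, f z ∂((gaussianReal 0 1).prod (gaussianReal 0 1))
      = ∫ z : ℝ × ℝ, (gaussianPDFReal 0 1 z.1 * gaussianPDFReal 0 1 z.2) * f z := by
  rw [gaussian_prod_eq]
  have hmeas : Measurable fun z : ℝ × ℝ =>
      (gaussianPDFReal 0 1 z.1 * gaussianPDFReal 0 1 z.2).toNNReal :=
    (((measurable_gaussianPDFReal 0 1).comp measurable_fst).mul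
      ((measurable_gaussianPDFReal 0 1).comp measurable_snd)).real_toNNReal
  rw [show (fun z : ℝ × ℝ => ENNReal.ofReal (gaussianPDFReal 0 1 z.1 * gaussianPDFReal 0 1 z.2))
      = fun z => ((gaussianPDFReal 0 1 z.1 * gaussianPDFReal 0 1 z.2).toNNReal : ℝ≥0∞) from rfl,
    integral_withDensity_eq_integral_smul hmeas f]
  congr 1
  funext z
  rw [NNReal.smul_def, Real.coe_toNNReal _
    (mul_nonneg (gaussianPDFReal_nonneg _ _ _) (gaussianPDFReal_nonneg _ _ _)), smul_eq_mul]

lemma pdf_prod (z : ℝ × ℝ) :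
    gaussianPDFReal 0 1 z.1 * gaussianPDFReal 0 1 z.2
      = (2 * π)⁻¹ * Real.exp (-(z.1 ^ 2 + z.2 ^ 2) / 2) := by
  have h1 : ∀ x : ℝ, gaussianPDFReal 0 1 x = (√(2 * π))⁻¹ * Real.exp (-(x ^ 2) / 2) := by
    intro x
    simp [gaussianPDFReal]
  rw [h1, h1]
  have hs : (√(2 * π))⁻¹ * (√(2 * π))⁻¹ = (2 * π)⁻¹ := by
    rw [← mul_inv, Real.mul_self_sqrt (by positivity)]
  have hE : -(z.1 ^ 2) / 2 + -(z.2 ^ 2) / 2 = -(z.1 ^ 2 + z.2 ^ 2) / 2 := by ring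
  calc (√(2 * π))⁻¹ * Real.exp (-(z.1 ^ 2) / 2) * ((√(2 * π))⁻¹ * Real.exp (-(z.2 ^ 2) / 2))
      = (√(2 * π))⁻¹ * (√(2 * π))⁻¹ * Real.exp (-(z.1 ^ 2) / 2 + -(z.2 ^ 2) / 2) := by
        rw [Real.exp_add]; ring
    _ = (2 * π)⁻¹ * Real.exp (-(z.1 ^ 2 + z.2 ^ 2) / 2) := by rw [hs, hE]

lemma polar_step (g : ℝ → ℝ) :
    (∫ z : ℝ × ℝ, g (z.1 ^ 2 + z.2 ^ 2))
      = (∫ r in Ioi (0:ℝ), r * g (r ^ 2)) * (2 * π) := by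
  rw [← integral_comp_polarCoord_symm (fun z : ℝ × ℝ => g (z.1 ^ 2 + z.2 ^ 2))]
  have h1 : ∀ p : ℝ × ℝ, p.1 • g ((polarCoord.symm p).1 ^ 2 + (polarCoord.symm p).2 ^ 2)
      = (fun r => r * g (r ^ 2)) p.1 * (fun _ : ℝ => (1:ℝ)) p.2 := by
    intro p
    have hp : (polarCoord.symm p).1 ^ 2 + (polarCoord.symm p).2 ^ 2 = p.1 ^ 2 := by
      have : polarCoord.symm p = (p.1 * Real.cos p.2, p.1 * Real.sin p.2) := rfl
      rw [this]
      have h := Real.sin_sq_add_cos_sq p.2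
      simp only []
      linear_combination p.1 ^ 2 * h
    rw [hp]
    simp [smul_eq_mul]
  have h2 : (∫ p in polarCoord.target,
        p.1 • g ((polarCoord.symm p).1 ^ 2 + (polarCoord.symm p).2 ^ 2))
      = ∫ p in Ioi (0:ℝ) ×ˢ Ioo (-π) π,
          (fun r => r * g (r ^ 2)) p.1 * (fun _ : ℝ => (1:ℝ)) p.2 := by
    rw [show polarCoord.target = Ioi (0:ℝ) ×ˢ Ioo (-π) π from rfl]
    exact setIntegral_congr_fun (measurableSet_Ioi.prod measurableSet_Ioo) fun p _ => h1 p
  have h3 := integral_prod_mul (μ := volume.restrict (Ioi (0:ℝ)))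
    (ν := volume.restrict (Ioo (-π) π)) (fun r : ℝ => r * g (r ^ 2)) (fun _ : ℝ => (1:ℝ))
  rw [h2, Measure.volume_eq_prod, ← Measure.prod_restrict, h3]
  have : (∫ _ in Ioo (-π) π, (1:ℝ)) = 2 * π := by
    simp [Real.volume_Ioo]
    rw [max_eq_left (by positivity)]
    ring
  rw [this]


/-- For independent standard Gaussians `Z₁, Z₂` and any `t ∈ ℝ`,
`E[|(Z₁ + t/2)t − (Z₁ + t/2)² − Z₂²|] = E[|−Z₁² − Z₂² + t²/4|] = −2 + 4e^{−t²/8} + t²/4`. -/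
theorem abs_moment_shifted_gaussians (t : ℝ) :
    (∫ z : ℝ × ℝ, |(z.1 + t / 2) * t - (z.1 + t / 2) ^ 2 - z.2 ^ 2|
        ∂((gaussianReal 0 1).prod (gaussianReal 0 1)))
      = (∫ z : ℝ × ℝ, |-z.1 ^ 2 - z.2 ^ 2 + t ^ 2 / 4|
        ∂((gaussianReal 0 1).prod (gaussianReal 0 1))) ∧
    (∫ z : ℝ × ℝ, |-z.1 ^ 2 - z.2 ^ 2 + t ^ 2 / 4|
        ∂((gaussianReal 0 1).prod (gaussianReal 0 1)))
      = -2 + 4 * exp (-(t ^ 2 / 8)) + t ^ 2 / 4 := by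
  constructor
  · congr 1
    funext z
    rw [show (z.1 + t / 2) * t - (z.1 + t / 2) ^ 2 - z.2 ^ 2
      = -z.1 ^ 2 - z.2 ^ 2 + t ^ 2 / 4 from by ring]
  · set c : ℝ := t ^ 2 / 4 with hc
    have hc0 : 0 ≤ c := by positivity
    rw [integral_gauss_prod]
    have hfun : (fun z : ℝ × ℝ =>
          (gaussianPDFReal 0 1 z.1 * gaussianPDFReal 0 1 z.2) * |-z.1 ^ 2 - z.2 ^ 2 + c|)
        = fun z : ℝ × ℝ =>
          (fun s : ℝ => (2 * π)⁻¹ * Real.exp (-s / 2) * |c - s|) (z.1 ^ 2 + z.2 ^ 2) := by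
      funext z
      rw [pdf_prod, show -z.1 ^ 2 - z.2 ^ 2 + c = c - (z.1 ^ 2 + z.2 ^ 2) from by ring]
    rw [hfun, polar_step (fun s : ℝ => (2 * π)⁻¹ * Real.exp (-s / 2) * |c - s|)]
    have hint : (∫ r in Set.Ioi (0:ℝ),
          r * ((fun s : ℝ => (2 * π)⁻¹ * Real.exp (-s / 2) * |c - s|) (r ^ 2)))
        = (2 * π)⁻¹ * ∫ r in Set.Ioi (0:ℝ), r * Real.exp (-(r ^ 2) / 2) * |c - r ^ 2| := by
      rw [← integral_const_mul]
      congr 1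
      funext r
      ring_nf
    rw [hint, key_radial hc0]
    have hππ : (2 * π)⁻¹ * (c - 2 + 4 * Real.exp (-(c / 2))) * (2 * π)
        = c - 2 + 4 * Real.exp (-(c / 2)) := by
      field_simp
    rw [hππ, show -(c / 2) = -(t ^ 2 / 8) from by rw [hc]; ring]
    ring
end
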